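/- arXiv:1503.03418 — 2 statements merged into one kernel-verified Lean document; each statement's English description precedes it below -/
import Mathlib

section
/- For every nonnegative integer n and any rational (or real) number a: ∑_{k=0}^{n} C(a,k)·C(−1−a,k)·C(a,n−k)·C(−1−a,n−k) = ∑_{k=0}^{n} C(2k,k)·C(a,k)·C(−1−a,k)·C(k,n−k)·(−1)^{n−k}. -/
/-- Generalized binomial coefficient C(a,k) = a(a-1)...(a-k+1)/k!. -/
def gchoose (a : ℚ) (k : ℕ) : ℚ :=
  (∏ i ∈ Finset.range k, (a - i)) / (Nat.factorial k : ℚ)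

/-- `x` is a `p`-adic integer: its reduced denominator is not divisible by `p`. -/
def IsPInt (p : ℕ) (x : ℚ) : Prop := ¬ p ∣ x.den

/-- `x ≡ y (mod p^e)` for rationals: `(x - y)/p^e` is a `p`-adic integer. -/
def ModCong (p e : ℕ) (x y : ℚ) : Prop :=
  ∃ z : ℚ, ¬ p ∣ z.den ∧ x - y = (p : ℚ) ^ e * z

/-- The Legendre polynomial `P_n(x) = ∑_{k=0}^n C(n,k) C(n+k,k) ((x-1)/2)^k`. -/
noncomputable def legendre (n : ℕ) : Polynomial ℚ :=
  ∑ k ∈ Finset.range (n + 1),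
    Polynomial.C ((n.choose k : ℚ) * ((n + k).choose k)) *
      (Polynomial.C (1/2 : ℚ) * (Polynomial.X - 1)) ^ k

set_option maxHeartbeats 2000000

def pf (a : ℚ) (k : ℕ) : ℚ := gchoose a k * gchoose (-1 - a) k


lemma gchoose_succ_mul (a : ℚ) (k : ℕ) :
    gchoose a (k+1) * ((k:ℚ)+1) = gchoose a k * (a - k) := by
  unfold gchoose
  rw [Finset.prod_range_succ, Nat.factorial_succ]
  have h1 : (k.factorial : ℚ) ≠ 0 := Nat.cast_ne_zero.2 k.factorial_ne_zero
  have h2 : ((k:ℚ)+1) ≠ 0 := by positivity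
  push_cast
  field_simp

lemma pf_succ (a : ℚ) (k : ℕ) :
    pf a (k+1) * ((k:ℚ)+1)^2 = ((k:ℚ)*((k:ℚ)+1) - a*(a+1)) * pf a k := by
  have h1 := gchoose_succ_mul a k
  have h2 := gchoose_succ_mul (-1-a) k
  simp only [pf]
  linear_combination (gchoose (-1-a) (k+1) * ((k:ℚ)+1)) * h1 +
    (gchoose a k * (a - (k:ℚ))) * h2

lemma pf_zero (a : ℚ) : pf a 0 = 1 := by
  simp [pf, gchoose]

lemma pf_one (a : ℚ) : pf a 1 = -(a*(a+1)) := by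
  simp [pf, gchoose]
  ring

lemma choose_cast_succ (k j : ℕ) :
    (k.choose (j+1) : ℚ) * ((j:ℚ)+1) = (k.choose j : ℚ) * ((k:ℚ) - (j:ℚ)) := by
  rcases le_or_gt j k with h | h
  · have h0 := Nat.choose_succ_right_eq k j
    have h1 : ((k.choose (j+1) * (j+1) : ℕ) : ℚ) = ((k.choose j * (k - j) : ℕ) : ℚ) := by
      rw [h0]
    push_cast [Nat.cast_sub h] at h1
    linarith
  · rw [Nat.choose_eq_zero_of_lt h, Nat.choose_eq_zero_of_lt (lt_of_lt_of_le h (Nat.le_succ j))]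
    simp

lemma centralBinom_cast (k : ℕ) :
    ((2*(k+1)).choose (k+1) : ℚ) * ((k:ℚ)+1) = 2*(2*(k:ℚ)+1) * ((2*k).choose k : ℚ) := by
  have h := congrArg (Nat.cast : ℕ → ℚ) (Nat.succ_mul_centralBinom_succ k)
  simp only [Nat.centralBinom] at h
  push_cast at h
  linarith

def certL (a : ℚ) (n k : ℕ) : ℚ :=
  (k:ℚ)^2 * (((n:ℚ)+1)*((n:ℚ)+1-(k:ℚ)) + a*(a+1)*(3*(n:ℚ)+3-2*(k:ℚ)))
    / ((n:ℚ)+1-(k:ℚ))^2 * pf a k * pf a (n - k)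

def certR (a : ℚ) (n k : ℕ) : ℚ :=
  -((n:ℚ)+1) * (k:ℚ)^2 * ((2*k).choose k : ℚ) * pf a k * (k.choose (n+1-k) : ℚ)
    * (-1 : ℚ)^(n+1-k)

lemma Lterm (a : ℚ) (k j : ℕ) :
    ((k:ℚ)+(j:ℚ)+2)^3 * (pf a k * pf a (j+2))
      - (2*((k:ℚ)+(j:ℚ)+1)+1)*(((k:ℚ)+(j:ℚ)+1)*((k:ℚ)+(j:ℚ)+2) - 2*(a*(a+1)))
          * (pf a k * pf a (j+1))
      + ((k:ℚ)+(j:ℚ)+1)*(((k:ℚ)+(j:ℚ)+1)^2 - 1 - 4*(a*(a+1))) * (pf a k * pf a j)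
    = certL a (k+j+1) (k+1) - certL a (k+j+1) k := by
  have e1 : k+j+1-(k+1) = j := by omega
  have e2 : k+j+1-k = j+1 := by omega
  have d1 : ((j:ℚ)+2) ≠ 0 := by positivity
  have d2 : ((j:ℚ)+1) ≠ 0 := by positivity
  have d3 : ((k:ℚ)+1) ≠ 0 := by positivity
  have g0 : certL a (k+j+1) k
      = (k:ℚ)^2 * (((k:ℚ)+(j:ℚ)+2)*((j:ℚ)+2) + a*(a+1)*(3*(k:ℚ)+3*(j:ℚ)+6-2*(k:ℚ)))
          / ((j:ℚ)+2)^2 * pf a k * pf a (j+1) := by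
    simp only [certL, e2]; push_cast; ring
  have g1 : certL a (k+j+1) (k+1)
      = ((k:ℚ)+1)^2 * (((k:ℚ)+(j:ℚ)+2)*((j:ℚ)+1) + a*(a+1)*(3*(k:ℚ)+3*(j:ℚ)+6-2*((k:ℚ)+1)))
          / ((j:ℚ)+1)^2 * pf a (k+1) * pf a j := by
    simp only [certL, e1]; push_cast; ring
  rw [g0, g1]
  have ek : pf a (k+1) = ((k:ℚ)*((k:ℚ)+1) - a*(a+1)) * pf a k / ((k:ℚ)+1)^2 :=
    (eq_div_iff (by positivity)).2 (pf_succ a k)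
  have ej : pf a (j+1) = ((j:ℚ)*((j:ℚ)+1) - a*(a+1)) * pf a j / ((j:ℚ)+1)^2 :=
    (eq_div_iff (by positivity)).2 (pf_succ a j)
  have ej1 : pf a (j+2) = (((j:ℚ)+1)*((j:ℚ)+2) - a*(a+1)) * pf a (j+1) / ((j:ℚ)+2)^2 := by
    have := pf_succ a (j+1)
    push_cast at this
    exact (eq_div_iff (by positivity)).2 (by linear_combination this)
  rw [ej1, ej, ek]
  field_simp
  ring

lemma Rterm (a : ℚ) (k j : ℕ) :
    ((k:ℚ)+(j:ℚ)+2)^3 * (((2*k).choose k : ℚ) * pf a k * (k.choose (j+2) : ℚ) * (-1:ℚ)^(j+2))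
      - (2*((k:ℚ)+(j:ℚ)+1)+1)*(((k:ℚ)+(j:ℚ)+1)*((k:ℚ)+(j:ℚ)+2) - 2*(a*(a+1)))
          * (((2*k).choose k : ℚ) * pf a k * (k.choose (j+1) : ℚ) * (-1:ℚ)^(j+1))
      + ((k:ℚ)+(j:ℚ)+1)*(((k:ℚ)+(j:ℚ)+1)^2 - 1 - 4*(a*(a+1)))
          * (((2*k).choose k : ℚ) * pf a k * (k.choose j : ℚ) * (-1:ℚ)^j)
    = certR a (k+j+1) (k+1) - certR a (k+j+1) k := by
  have e1 : k+j+1+1-(k+1) = j+1 := by omega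
  have e2 : k+j+1+1-k = j+2 := by omega
  simp only [certR, e1, e2]
  have d1 : ((j:ℚ)+2) ≠ 0 := by positivity
  have d2 : ((j:ℚ)+1) ≠ 0 := by positivity
  have d3 : ((k:ℚ)+1) ≠ 0 := by positivity
  have ek : pf a (k+1) = ((k:ℚ)*((k:ℚ)+1) - a*(a+1)) * pf a k / ((k:ℚ)+1)^2 :=
    (eq_div_iff (by positivity)).2 (pf_succ a k)
  have eB : ((2*(k+1)).choose (k+1) : ℚ) = 2*(2*(k:ℚ)+1) * ((2*k).choose k : ℚ) / ((k:ℚ)+1) :=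
    (eq_div_iff d3).2 (centralBinom_cast k)
  have eC1 : (k.choose (j+1) : ℚ) = (k.choose j : ℚ) * ((k:ℚ) - (j:ℚ)) / ((j:ℚ)+1) :=
    (eq_div_iff d2).2 (choose_cast_succ k j)
  have eC2 : (k.choose (j+2) : ℚ) = (k.choose (j+1) : ℚ) * ((k:ℚ) - (j:ℚ) - 1) / ((j:ℚ)+2) := by
    have := choose_cast_succ k (j+1)
    push_cast at this
    exact (eq_div_iff d1).2 (by linear_combination this)
  have eCp : ((k+1).choose (j+1) : ℚ) = (k.choose j : ℚ) + (k.choose (j+1) : ℚ) := by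
    rw [Nat.choose_succ_succ]
    push_cast
    ring
  rw [eC2, eCp, eC1, ek, eB]
  push_cast [pow_succ]
  field_simp
  ring

def LL (a : ℚ) (n : ℕ) : ℚ := ∑ k ∈ Finset.range (n+1), pf a k * pf a (n - k)

def RS (a : ℚ) (n : ℕ) : ℚ :=
  ∑ k ∈ Finset.range (n+1),
    ((2*k).choose k : ℚ) * pf a k * (k.choose (n-k) : ℚ) * (-1 : ℚ)^(n-k)

lemma recL (a : ℚ) (m : ℕ) :
    ((m:ℚ)+2)^3 * LL a (m+2)
      = (2*((m:ℚ)+1)+1)*(((m:ℚ)+1)*((m:ℚ)+2) - 2*(a*(a+1))) * LL a (m+1)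
        - ((m:ℚ)+1)*(((m:ℚ)+1)^2 - 1 - 4*(a*(a+1))) * LL a m := by
  have hsplit2 : LL a (m+2)
      = (∑ k ∈ Finset.range (m+1), pf a k * pf a ((m-k)+2))
        + pf a (m+1) * pf a 1 + pf a (m+2) * pf a 0 := by
    unfold LL
    rw [show m+2+1 = (m+1)+1+1 from rfl, Finset.sum_range_succ, Finset.sum_range_succ]
    rw [show m+2-(m+1) = 1 from by omega, show m+2-(m+2) = 0 from by omega]
    congr 1
    congr 1
    refine Finset.sum_congr rfl fun k hk => ?_
    have hk' : k ≤ m := by simpa using Nat.lt_succ_iff.mp (Finset.mem_range.mp hk)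
    rw [show m+2-k = (m-k)+2 from by omega]
  have hsplit1 : LL a (m+1)
      = (∑ k ∈ Finset.range (m+1), pf a k * pf a ((m-k)+1)) + pf a (m+1) * pf a 0 := by
    unfold LL
    rw [Finset.sum_range_succ, show m+1-(m+1) = 0 from by omega]
    congr 1
    refine Finset.sum_congr rfl fun k hk => ?_
    have hk' : k ≤ m := by simpa using Nat.lt_succ_iff.mp (Finset.mem_range.mp hk)
    rw [show m+1-k = (m-k)+1 from by omega]
  have hterm : ∀ k ∈ Finset.range (m+1),
      ((m:ℚ)+2)^3 * (pf a k * pf a ((m-k)+2))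
        - (2*((m:ℚ)+1)+1)*(((m:ℚ)+1)*((m:ℚ)+2) - 2*(a*(a+1))) * (pf a k * pf a ((m-k)+1))
        + ((m:ℚ)+1)*(((m:ℚ)+1)^2 - 1 - 4*(a*(a+1))) * (pf a k * pf a (m-k))
      = certL a (m+1) (k+1) - certL a (m+1) k := by
    intro k hk
    have hk' : k ≤ m := Nat.lt_succ_iff.mp (Finset.mem_range.mp hk)
    obtain ⟨j, rfl⟩ : ∃ j, m = k + j := ⟨m - k, by omega⟩
    rw [show k+j-k = j from by omega]
    have h := Lterm a k j
    have hc : ((k+j : ℕ):ℚ) = (k:ℚ)+(j:ℚ) := by push_cast; ring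
    rw [hc]
    linear_combination h
  have hsum1 : ∑ k ∈ Finset.range (m+1),
      (((m:ℚ)+2)^3 * (pf a k * pf a ((m-k)+2))
        - (2*((m:ℚ)+1)+1)*(((m:ℚ)+1)*((m:ℚ)+2) - 2*(a*(a+1))) * (pf a k * pf a ((m-k)+1))
        + ((m:ℚ)+1)*(((m:ℚ)+1)^2 - 1 - 4*(a*(a+1))) * (pf a k * pf a (m-k)))
      = certL a (m+1) (m+1) - certL a (m+1) 0 :=
    (Finset.sum_congr rfl hterm).trans (Finset.sum_range_sub (certL a (m+1)) (m+1))
  have hG0 : certL a (m+1) 0 = 0 := by simp [certL]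
  have hGtop : certL a (m+1) (m+1)
      = ((m:ℚ)+1)^2 * (((m:ℚ)+2) + a*(a+1)*((m:ℚ)+4)) * pf a (m+1) := by
    unfold certL
    rw [Nat.sub_self, pf_zero]
    push_cast
    have : ((m:ℚ)+1+1-((m:ℚ)+1)) = 1 := by ring
    rw [this]
    ring
  rw [hG0, hGtop, sub_zero] at hsum1
  rw [Finset.sum_add_distrib, Finset.sum_sub_distrib, ← Finset.mul_sum, ← Finset.mul_sum,
    ← Finset.mul_sum] at hsum1
  rw [hsplit2, hsplit1]
  unfold LL
  rw [pf_zero, pf_one]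
  have hps := pf_succ a (m+1)
  push_cast at hps
  linear_combination hsum1 + ((m:ℚ)+2) * hps

lemma recR (a : ℚ) (m : ℕ) :
    ((m:ℚ)+2)^3 * RS a (m+2)
      = (2*((m:ℚ)+1)+1)*(((m:ℚ)+1)*((m:ℚ)+2) - 2*(a*(a+1))) * RS a (m+1)
        - ((m:ℚ)+1)*(((m:ℚ)+1)^2 - 1 - 4*(a*(a+1))) * RS a m := by
  have hsplit2 : RS a (m+2)
      = (∑ k ∈ Finset.range (m+1),
          ((2*k).choose k : ℚ) * pf a k * (k.choose ((m-k)+2) : ℚ) * (-1:ℚ)^((m-k)+2))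
        - ((2*(m+1)).choose (m+1) : ℚ) * pf a (m+1) * ((m:ℚ)+1)
        + ((2*(m+2)).choose (m+2) : ℚ) * pf a (m+2) := by
    unfold RS
    rw [show m+2+1 = (m+1)+1+1 from rfl, Finset.sum_range_succ, Finset.sum_range_succ]
    rw [show m+2-(m+1) = 1 from by omega, show m+2-(m+2) = 0 from by omega]
    rw [Nat.choose_one_right, Nat.choose_zero_right]
    have hs : (∑ k ∈ Finset.range (m+1),
        ((2*k).choose k : ℚ) * pf a k * (k.choose (m+2-k) : ℚ) * (-1:ℚ)^(m+2-k))
        = ∑ k ∈ Finset.range (m+1),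
          ((2*k).choose k : ℚ) * pf a k * (k.choose ((m-k)+2) : ℚ) * (-1:ℚ)^((m-k)+2) := by
      refine Finset.sum_congr rfl fun k hk => ?_
      have hk' : k ≤ m := Nat.lt_succ_iff.mp (Finset.mem_range.mp hk)
      rw [show m+2-k = (m-k)+2 from by omega]
    rw [hs]
    push_cast
    ring
  have hsplit1 : RS a (m+1)
      = (∑ k ∈ Finset.range (m+1),
          ((2*k).choose k : ℚ) * pf a k * (k.choose ((m-k)+1) : ℚ) * (-1:ℚ)^((m-k)+1))
        + ((2*(m+1)).choose (m+1) : ℚ) * pf a (m+1) := by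
    unfold RS
    rw [Finset.sum_range_succ, show m+1-(m+1) = 0 from by omega, Nat.choose_zero_right]
    have hs : (∑ k ∈ Finset.range (m+1),
        ((2*k).choose k : ℚ) * pf a k * (k.choose (m+1-k) : ℚ) * (-1:ℚ)^(m+1-k))
        = ∑ k ∈ Finset.range (m+1),
          ((2*k).choose k : ℚ) * pf a k * (k.choose ((m-k)+1) : ℚ) * (-1:ℚ)^((m-k)+1) := by
      refine Finset.sum_congr rfl fun k hk => ?_
      have hk' : k ≤ m := Nat.lt_succ_iff.mp (Finset.mem_range.mp hk)
      rw [show m+1-k = (m-k)+1 from by omega]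
    rw [hs]
    push_cast
    ring
  have hterm : ∀ k ∈ Finset.range (m+1),
      ((m:ℚ)+2)^3 * (((2*k).choose k : ℚ) * pf a k * (k.choose ((m-k)+2) : ℚ) * (-1:ℚ)^((m-k)+2))
        - (2*((m:ℚ)+1)+1)*(((m:ℚ)+1)*((m:ℚ)+2) - 2*(a*(a+1)))
            * (((2*k).choose k : ℚ) * pf a k * (k.choose ((m-k)+1) : ℚ) * (-1:ℚ)^((m-k)+1))
        + ((m:ℚ)+1)*(((m:ℚ)+1)^2 - 1 - 4*(a*(a+1)))
            * (((2*k).choose k : ℚ) * pf a k * (k.choose (m-k) : ℚ) * (-1:ℚ)^(m-k))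
      = certR a (m+1) (k+1) - certR a (m+1) k := by
    intro k hk
    have hk' : k ≤ m := Nat.lt_succ_iff.mp (Finset.mem_range.mp hk)
    obtain ⟨j, rfl⟩ : ∃ j, m = k + j := ⟨m - k, by omega⟩
    rw [show k+j-k = j from by omega]
    have h := Rterm a k j
    have hc : ((k+j : ℕ):ℚ) = (k:ℚ)+(j:ℚ) := by push_cast; ring
    rw [hc]
    linear_combination h
  have hsum1 : ∑ k ∈ Finset.range (m+1),
      (((m:ℚ)+2)^3 * (((2*k).choose k : ℚ) * pf a k * (k.choose ((m-k)+2) : ℚ) * (-1:ℚ)^((m-k)+2))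
        - (2*((m:ℚ)+1)+1)*(((m:ℚ)+1)*((m:ℚ)+2) - 2*(a*(a+1)))
            * (((2*k).choose k : ℚ) * pf a k * (k.choose ((m-k)+1) : ℚ) * (-1:ℚ)^((m-k)+1))
        + ((m:ℚ)+1)*(((m:ℚ)+1)^2 - 1 - 4*(a*(a+1)))
            * (((2*k).choose k : ℚ) * pf a k * (k.choose (m-k) : ℚ) * (-1:ℚ)^(m-k)))
      = certR a (m+1) (m+1) - certR a (m+1) 0 :=
    (Finset.sum_congr rfl hterm).trans (Finset.sum_range_sub (certR a (m+1)) (m+1))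
  have hG0 : certR a (m+1) 0 = 0 := by simp [certR]
  have hGtop : certR a (m+1) (m+1)
      = ((m:ℚ)+2) * ((m:ℚ)+1)^3 * ((2*(m+1)).choose (m+1) : ℚ) * pf a (m+1) := by
    unfold certR
    rw [show m+1+1-(m+1) = 1 from by omega, Nat.choose_one_right]
    push_cast
    ring
  rw [hG0, hGtop, sub_zero] at hsum1
  rw [Finset.sum_add_distrib, Finset.sum_sub_distrib, ← Finset.mul_sum, ← Finset.mul_sum,
    ← Finset.mul_sum] at hsum1
  rw [hsplit2, hsplit1]
  unfold RS
  have hps := pf_succ a (m+1)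
  have hB := centralBinom_cast (m+1)
  push_cast at hps hB
  linear_combination hsum1 + ((m:ℚ)+2)^2 * pf a (m+2) * hB
    + 2*(2*(m:ℚ)+3) * ((2*(m+1)).choose (m+1) : ℚ) * hps

lemma key (a : ℚ) : ∀ n, LL a n = RS a n := by
  intro n
  induction n using Nat.strong_induction_on with
  | _ n ih =>
    rcases n with _ | _ | m
    · simp [LL, RS, pf_zero]
    · simp [LL, RS, Finset.sum_range_succ, pf_zero]
      ring
    · have h1 := ih (m+1) (by omega)
      have h0 := ih m (by omega)
      have hL := recL a m
      have hR := recR a m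
      have hne : ((m:ℚ)+2)^3 ≠ 0 := by positivity
      apply mul_left_cancel₀ hne
      rw [hL, hR, h1, h0]

theorem sum_gchoose_identity (n : ℕ) (a : ℚ) :
    ∑ k ∈ Finset.range (n + 1),
        gchoose a k * gchoose (-1 - a) k * gchoose a (n - k) * gchoose (-1 - a) (n - k) =
      ∑ k ∈ Finset.range (n + 1),
        ((2 * k).choose k : ℚ) * gchoose a k * gchoose (-1 - a) k *
          (k.choose (n - k)) * (-1) ^ (n - k) := by
  have h := key a n
  unfold LL RS at h
  calc ∑ k ∈ Finset.range (n + 1),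
        gchoose a k * gchoose (-1 - a) k * gchoose a (n - k) * gchoose (-1 - a) (n - k)
      = ∑ k ∈ Finset.range (n+1), pf a k * pf a (n - k) :=
        Finset.sum_congr rfl fun k _ => by simp only [pf]; ring
    _ = ∑ k ∈ Finset.range (n+1),
          ((2*k).choose k : ℚ) * pf a k * (k.choose (n-k) : ℚ) * (-1 : ℚ)^(n-k) := h
    _ = _ := Finset.sum_congr rfl fun k _ => by simp only [pf]; ring
end

section
/- Let p be an odd prime and a ∈ ℤ_p. Then for all x ∈ ℤ_p: (∑_{k=0}^{p−1} C(a,k)·C(−1−a,k)·x^k)² ≡ ∑_{k=0}^{p−1} C(2k,k)·C(a,k)·C(−1−a,k)·(x(1−x))^k (mod p²). -/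
open Finset

/-! ### IsPInt infrastructure -/

lemma isPInt_of_eq_div {p : ℕ} (m d : ℤ) (hpd : ¬ (p:ℤ) ∣ d) {x : ℚ}
    (hx : x = (m : ℚ) / d) : IsPInt p x := by
  intro hden
  have h1 : ((x.den : ℤ)) ∣ d := by
    rw [hx, ← Rat.divInt_eq_div]
    exact Rat.den_dvd m d
  exact hpd (dvd_trans (Int.natCast_dvd_natCast.2 hden) h1)

lemma isPInt_def {p : ℕ} {x : ℚ} (hx : IsPInt p x) :
    ∃ m d : ℤ, d ≠ 0 ∧ ¬ (p:ℤ) ∣ d ∧ x = (m : ℚ) / d := by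
  refine ⟨x.num, x.den, ?_, ?_, ?_⟩
  · exact_mod_cast x.den_nz
  · exact fun h => hx (Int.natCast_dvd_natCast.1 h)
  · exact_mod_cast (Rat.num_div_den x).symm

lemma isPInt_intCast {p : ℕ} (hp : p.Prime) (n : ℤ) : IsPInt p (n : ℚ) := by
  apply isPInt_of_eq_div (p := p) n 1
  · rw [show (1:ℤ) = ((1:ℕ):ℤ) from rfl, Int.natCast_dvd_natCast, Nat.dvd_one]
    exact hp.ne_one
  · simp

lemma isPInt_natCast {p : ℕ} (hp : p.Prime) (n : ℕ) : IsPInt p (n : ℚ) := by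
  simpa using isPInt_intCast hp n

lemma IsPInt.add {p : ℕ} (hp : p.Prime) {x y : ℚ} (hx : IsPInt p x) (hy : IsPInt p y) :
    IsPInt p (x + y) := by
  obtain ⟨m, d, hd, hpd, rfl⟩ := isPInt_def hx
  obtain ⟨m', d', hd', hpd', rfl⟩ := isPInt_def hy
  apply isPInt_of_eq_div (m * d' + d * m') (d * d')
  · rw [(Int.prime_iff_natAbs_prime.2 (by simpa using hp)).dvd_mul]
    tauto
  · push_cast
    rw [div_add_div _ _ (by exact_mod_cast hd) (by exact_mod_cast hd')]

lemma IsPInt.mul {p : ℕ} (hp : p.Prime) {x y : ℚ} (hx : IsPInt p x) (hy : IsPInt p y) :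
    IsPInt p (x * y) := by
  obtain ⟨m, d, hd, hpd, rfl⟩ := isPInt_def hx
  obtain ⟨m', d', hd', hpd', rfl⟩ := isPInt_def hy
  apply isPInt_of_eq_div (m * m') (d * d')
  · rw [(Int.prime_iff_natAbs_prime.2 (by simpa using hp)).dvd_mul]
    tauto
  · push_cast
    rw [div_mul_div_comm]

lemma IsPInt.neg {p : ℕ} {x : ℚ} (hx : IsPInt p x) : IsPInt p (-x) := by
  obtain ⟨m, d, hd, hpd, rfl⟩ := isPInt_def hx
  exact isPInt_of_eq_div (-m) d hpd (by push_cast; ring)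

lemma IsPInt.sub {p : ℕ} (hp : p.Prime) {x y : ℚ} (hx : IsPInt p x) (hy : IsPInt p y) :
    IsPInt p (x - y) := by
  rw [sub_eq_add_neg]; exact hx.add hp hy.neg

lemma IsPInt.pow {p : ℕ} (hx : IsPInt p x) (hp : p.Prime) (k : ℕ) : IsPInt p (x^k) := by
  induction k with
  | zero => simpa using isPInt_natCast hp 1
  | succ k ih => rw [pow_succ]; exact ih.mul hp hx

/-- The subring of `p`-integral rationals. -/
def R0 {p : ℕ} (hp : p.Prime) : Subring ℚ where
  carrier := {x | IsPInt p x}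
  zero_mem' := by simpa using isPInt_natCast hp 0
  one_mem' := by simpa using isPInt_natCast hp 1
  add_mem' := IsPInt.add hp
  mul_mem' := IsPInt.mul hp
  neg_mem' := IsPInt.neg

lemma mem_R0 {p : ℕ} (hp : p.Prime) {x : ℚ} : x ∈ R0 hp ↔ IsPInt p x := Iff.rfl

lemma isPInt_inv_factorial {p k : ℕ} (hp : p.Prime) (hk : k < p) :
    IsPInt p ((Nat.factorial k : ℚ)⁻¹) := by
  apply isPInt_of_eq_div (p := p) 1 (Nat.factorial k)
  · rw [Int.natCast_dvd_natCast, Nat.Prime.dvd_factorial hp]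
    omega
  · push_cast; rw [one_div]

/-- residue of a p-integral rational mod p -/
lemma exists_residue {p : ℕ} (hp : p.Prime) {x : ℚ} (hx : IsPInt p x) :
    ∃ n : ℕ, n < p ∧ IsPInt p ((x - n) / p) := by
  obtain ⟨m, d, hd, hpd, rfl⟩ := isPInt_def hx
  haveI : Fact p.Prime := ⟨hp⟩
  haveI : NeZero p := ⟨hp.pos.ne'⟩
  set n : ℕ := (((m : ZMod p)) * ((d : ZMod p))⁻¹).val with hn
  have hdz : ((d : ZMod p)) ≠ 0 := by
    intro h
    rw [ZMod.intCast_zmod_eq_zero_iff_dvd] at h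
    exact hpd h
  have key : (p:ℤ) ∣ (m - (n:ℤ) * d) := by
    rw [← ZMod.intCast_zmod_eq_zero_iff_dvd]
    push_cast
    rw [hn, ZMod.natCast_val, ZMod.cast_id]
    rw [mul_assoc, inv_mul_cancel₀ hdz, mul_one, sub_self]
  obtain ⟨e, he⟩ := key
  refine ⟨n, ?_, ?_⟩
  · rw [hn]; exact ZMod.val_lt _
  · apply isPInt_of_eq_div e d hpd
    have hdq : (d:ℚ) ≠ 0 := by exact_mod_cast hd
    have hpq : (p:ℚ) ≠ 0 := by exact_mod_cast hp.pos.ne'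
    have he' : (m:ℚ) - n * d = p * e := by exact_mod_cast congrArg (fun z : ℤ => (z:ℚ)) he
    rw [div_eq_div_iff hpq hdq, sub_mul, div_mul_cancel₀ _ hdq]
    linear_combination he'


/-! ### binomial identities over ℚ -/

lemma hA (a k : ℕ) : ((a:ℚ) + 1 - k) * ((a+1).choose k : ℚ) = ((a:ℚ) + 1) * (a.choose k : ℚ) := by
  rcases le_or_gt k (a+1) with h | h
  · have h0 := congrArg (fun z : ℕ => (z:ℚ)) (Nat.choose_mul_succ_eq a k)
    push_cast [Nat.cast_sub h] at h0
    linear_combination -h0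
  · rw [Nat.choose_eq_zero_of_lt h, Nat.choose_eq_zero_of_lt (by omega)]
    push_cast; ring

lemma hB (a k : ℕ) : ((a:ℚ) + 1) * ((a+1+k).choose k : ℚ) = ((a:ℚ) + 1 + k) * ((a+k).choose k : ℚ) := by
  have h := hA (a+k) k
  rw [show a+k+1 = a+1+k by omega] at h
  push_cast at h
  linear_combination h

lemma hC (a k : ℕ) : ((k:ℚ) + 1) * (a.choose (k+1) : ℚ) = ((a:ℚ) - k) * (a.choose k : ℚ) := by
  rcases le_or_gt k a with h | h
  · have h0 := congrArg (fun z : ℕ => (z:ℚ)) (Nat.choose_succ_right_eq a k)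
    push_cast [Nat.cast_sub h] at h0
    linear_combination h0
  · rw [Nat.choose_eq_zero_of_lt h, Nat.choose_eq_zero_of_lt (by omega)]
    push_cast; ring

lemma hD (a k : ℕ) : ((k:ℚ) + 1) * ((a+k+1).choose (k+1) : ℚ) = ((a:ℚ) + k + 1) * ((a+k).choose k : ℚ) := by
  have := Nat.add_one_mul_choose_eq (a+k) k
  have hcast : (((a+k)+1) * ((a+k).choose k) : ℚ) = (((a+k+1).choose (k+1)) * (k+1) : ℚ) := by
    exact_mod_cast congrArg (fun z : ℕ => (z:ℚ)) this
  push_cast at hcast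
  linear_combination -hcast

/-- coefficient identity for the Legendre three-term recurrence -/
lemma E0k (n j : ℕ) :
    ((n:ℚ)+2) * (((n+2).choose (j+1) : ℚ) * ((n+3+j).choose (j+1) : ℚ))
      = (2*(n:ℚ)+3) * (((n+1).choose (j+1) : ℚ) * ((n+2+j).choose (j+1) : ℚ)
          + 2 * ((n+1).choose j : ℚ) * ((n+1+j).choose j : ℚ))
        - ((n:ℚ)+1) * ((n.choose (j+1) : ℚ) * ((n+1+j).choose (j+1) : ℚ)) := by
  set k := j
  set A : ℚ := ((n+1).choose k : ℚ) with hA'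
  set B : ℚ := ((n+1+k).choose k : ℚ) with hB'
  have hk : ((k:ℚ)+1) ≠ 0 := by positivity
  have hn1 : ((n:ℚ)+1) ≠ 0 := by positivity
  have hn2 : ((n:ℚ)+2) ≠ 0 := by positivity
  -- moments
  have m1 : ((k:ℚ)+1) * ((n+2).choose (k+1) : ℚ) = ((n:ℚ)+2) * A := by
    have h1 := hC (n+2) k
    have h2 := hA (n+1) k
    push_cast at h1 h2
    linear_combination h1 + h2
  have m2 : ((n:ℚ)+2) * (((k:ℚ)+1) * ((n+3+k).choose (k+1) : ℚ))
      = ((n:ℚ)+3+k) * (((n:ℚ)+2+k) * B) := by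
    have h1 := hD (n+2) k
    rw [show n+2+k+1 = n+3+k by omega] at h1
    have h2 := hB (n+1) k
    rw [show n+1+1+k = n+2+k by omega] at h2
    push_cast at h1 h2
    linear_combination ((n:ℚ)+2) * h1 + ((n:ℚ)+3+k) * h2
  have m3 : ((k:ℚ)+1) * ((n+1).choose (k+1) : ℚ) = ((n:ℚ)+1-k) * A := by
    have h1 := hC (n+1) k
    push_cast at h1
    linear_combination h1
  have m4 : ((k:ℚ)+1) * ((n+2+k).choose (k+1) : ℚ) = ((n:ℚ)+2+k) * B := by
    have h1 := hD (n+1) k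
    rw [show n+1+k+1 = n+2+k by omega] at h1
    push_cast at h1
    linear_combination h1
  have m5 : ((n:ℚ)+1) * (((k:ℚ)+1) * (n.choose (k+1) : ℚ)) = ((n:ℚ)-k) * (((n:ℚ)+1-k) * A) := by
    have h1 := hC n k
    have h2 := hA n k
    push_cast at h1 h2
    linear_combination ((n:ℚ)+1) * h1 - ((n:ℚ)-k) * h2
  have m6 : ((k:ℚ)+1) * ((n+1+k).choose (k+1) : ℚ) = ((n:ℚ)+1) * B := by
    have h1 := hD n k
    rw [show n+k+1 = n+1+k by omega] at h1
    have h2 := hB n k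
    push_cast at h1 h2
    linear_combination h1 - h2
  -- solved forms
  have e1 : ((n+2).choose (k+1) : ℚ) = ((n:ℚ)+2) * A / ((k:ℚ)+1) := by
    rw [eq_div_iff hk]; linear_combination m1
  have e2 : ((n+3+k).choose (k+1) : ℚ) = ((n:ℚ)+3+k) * (((n:ℚ)+2+k) * B) / (((n:ℚ)+2) * (((k:ℚ)+1))) := by
    rw [eq_div_iff (by positivity)]; linear_combination m2
  have e3 : ((n+1).choose (k+1) : ℚ) = ((n:ℚ)+1-k) * A / ((k:ℚ)+1) := by
    rw [eq_div_iff hk]; linear_combination m3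
  have e4 : ((n+2+k).choose (k+1) : ℚ) = ((n:ℚ)+2+k) * B / ((k:ℚ)+1) := by
    rw [eq_div_iff hk]; linear_combination m4
  have e5 : (n.choose (k+1) : ℚ) = ((n:ℚ)-k) * (((n:ℚ)+1-k) * A) / (((n:ℚ)+1) * ((k:ℚ)+1)) := by
    rw [eq_div_iff (by positivity)]; linear_combination m5
  have e6 : ((n+1+k).choose (k+1) : ℚ) = ((n:ℚ)+1) * B / ((k:ℚ)+1) := by
    rw [eq_div_iff hk]; linear_combination m6
  rw [e1, e2, e3, e4, e5, e6]
  field_simp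
  ring

/-- coefficient identity for the companion recurrence -/
lemma E1k (n k : ℕ) :
    ((n:ℚ)+2) * (((n+1).choose k : ℚ) * ((n+2+k).choose k : ℚ))
      = (2*(n:ℚ)+3) * (((n+1).choose k : ℚ) * ((n+1+k).choose k : ℚ))
        - ((n:ℚ)+1) * ((n.choose k : ℚ) * ((n+1+k).choose k : ℚ)) := by
  have h1 := hB (n+1) k
  rw [show n+1+1+k = n+2+k by omega] at h1
  have h2 := hA n k
  have h3 := hB n k
  push_cast at h1 h2 h3
  -- (n+2)*C(n+2+k,k) = (n+2+k)*C(n+1+k,k) ; (n+1)C(n,k) = (n+1-k)C(n+1,k)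
  linear_combination ((n+1).choose k : ℚ) * h1 - ((n+1+k).choose k : ℚ) * h2

/-- coefficient identity for the squared recurrence -/
lemma E2k (n k : ℕ) :
    ((n:ℚ)+2)^2 * (((2*k+2).choose (k+1) : ℚ) * ((n+2).choose (k+1) : ℚ) * ((n+3+k).choose (k+1) : ℚ))
      = (2*(n:ℚ)+3)^2 * (((2*k+2).choose (k+1) : ℚ) * ((n+1).choose (k+1) : ℚ) * ((n+2+k).choose (k+1) : ℚ)
          + 4 * ((2*k).choose k : ℚ) * ((n+1).choose k : ℚ) * ((n+1+k).choose k : ℚ))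
        - 2*((n:ℚ)+1)*(2*(n:ℚ)+3) * (((2*k+2).choose (k+1) : ℚ) * (n.choose (k+1) : ℚ) * ((n+2+k).choose (k+1) : ℚ)
          + 4 * ((2*k).choose k : ℚ) * (n.choose k : ℚ) * ((n+1+k).choose k : ℚ))
        + ((n:ℚ)+1)^2 * (((2*k+2).choose (k+1) : ℚ) * (n.choose (k+1) : ℚ) * ((n+1+k).choose (k+1) : ℚ)) := by
  set A : ℚ := ((n+1).choose k : ℚ) with hA'
  set B : ℚ := ((n+1+k).choose k : ℚ) with hB'
  set E : ℚ := ((2*k).choose k : ℚ) with hE'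
  have hk : ((k:ℚ)+1) ≠ 0 := by positivity
  have m1 : ((k:ℚ)+1) * ((n+2).choose (k+1) : ℚ) = ((n:ℚ)+2) * A := by
    have h1 := hC (n+2) k
    have h2 := hA (n+1) k
    push_cast at h1 h2
    linear_combination h1 + h2
  have m2 : ((n:ℚ)+2) * (((k:ℚ)+1) * ((n+3+k).choose (k+1) : ℚ))
      = ((n:ℚ)+3+k) * (((n:ℚ)+2+k) * B) := by
    have h1 := hD (n+2) k
    rw [show n+2+k+1 = n+3+k by omega] at h1
    have h2 := hB (n+1) k
    rw [show n+1+1+k = n+2+k by omega] at h2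
    push_cast at h1 h2
    linear_combination ((n:ℚ)+2) * h1 + ((n:ℚ)+3+k) * h2
  have m3 : ((k:ℚ)+1) * ((n+1).choose (k+1) : ℚ) = ((n:ℚ)+1-k) * A := by
    have h1 := hC (n+1) k
    push_cast at h1
    linear_combination h1
  have m4 : ((k:ℚ)+1) * ((n+2+k).choose (k+1) : ℚ) = ((n:ℚ)+2+k) * B := by
    have h1 := hD (n+1) k
    rw [show n+1+k+1 = n+2+k by omega] at h1
    push_cast at h1
    linear_combination h1
  have m5 : ((n:ℚ)+1) * (((k:ℚ)+1) * (n.choose (k+1) : ℚ)) = ((n:ℚ)-k) * (((n:ℚ)+1-k) * A) := by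
    have h1 := hC n k
    have h2 := hA n k
    push_cast at h1 h2
    linear_combination ((n:ℚ)+1) * h1 - ((n:ℚ)-k) * h2
  have m6 : ((k:ℚ)+1) * ((n+1+k).choose (k+1) : ℚ) = ((n:ℚ)+1) * B := by
    have h1 := hD n k
    rw [show n+k+1 = n+1+k by omega] at h1
    have h2 := hB n k
    push_cast at h1 h2
    linear_combination h1 - h2
  have m7 : ((k:ℚ)+1) * (((k:ℚ)+1) * ((2*k+2).choose (k+1) : ℚ)) = (2*(k:ℚ)+2) * ((2*(k:ℚ)+1) * E) := by
    have h1 := hD (k+1) k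
    rw [show k+1+k+1 = 2*k+2 by omega, show k+1+k = 2*k+1 by omega] at h1
    have h2 := hA (2*k) k
    rw [show 2*k+1 = 2*k+1 by omega] at h2
    push_cast at h1 h2
    linear_combination ((k:ℚ)+1) * h1 + (2*(k:ℚ)+2) * h2
  have m8 : ((n:ℚ)+1) * (n.choose k : ℚ) = ((n:ℚ)+1-k) * A := by
    have h2 := hA n k
    push_cast at h2
    linear_combination -h2
  have hn1 : ((n:ℚ)+1) ≠ 0 := by positivity
  have hn2 : ((n:ℚ)+2) ≠ 0 := by positivity
  have e1 : ((n+2).choose (k+1) : ℚ) = ((n:ℚ)+2) * A / ((k:ℚ)+1) := by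
    rw [eq_div_iff hk]; linear_combination m1
  have e2 : ((n+3+k).choose (k+1) : ℚ) = ((n:ℚ)+3+k) * (((n:ℚ)+2+k) * B) / (((n:ℚ)+2) * (((k:ℚ)+1))) := by
    rw [eq_div_iff (by positivity)]; linear_combination m2
  have e3 : ((n+1).choose (k+1) : ℚ) = ((n:ℚ)+1-k) * A / ((k:ℚ)+1) := by
    rw [eq_div_iff hk]; linear_combination m3
  have e4 : ((n+2+k).choose (k+1) : ℚ) = ((n:ℚ)+2+k) * B / ((k:ℚ)+1) := by
    rw [eq_div_iff hk]; linear_combination m4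
  have e5 : (n.choose (k+1) : ℚ) = ((n:ℚ)-k) * (((n:ℚ)+1-k) * A) / (((n:ℚ)+1) * ((k:ℚ)+1)) := by
    rw [eq_div_iff (by positivity)]; linear_combination m5
  have e6 : ((n+1+k).choose (k+1) : ℚ) = ((n:ℚ)+1) * B / ((k:ℚ)+1) := by
    rw [eq_div_iff hk]; linear_combination m6
  have e7 : ((2*k+2).choose (k+1) : ℚ) = (2*(k:ℚ)+2) * ((2*(k:ℚ)+1) * E) / (((k:ℚ)+1) * ((k:ℚ)+1)) := by
    rw [eq_div_iff (by positivity)]; linear_combination m7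
  have e8 : (n.choose k : ℚ) = ((n:ℚ)+1-k) * A / ((n:ℚ)+1) := by
    rw [eq_div_iff hn1]; linear_combination m8
  rw [e1, e2, e3, e4, e5, e6, e7, e8]
  field_simp
  ring

/-! ### the three polynomial families -/

def bb (n k : ℕ) : ℚ := (n.choose k : ℚ) * ((n+k).choose k : ℚ)
def ll (n : ℕ) (x : ℚ) : ℚ := ∑ k ∈ range (n+1), (-1)^k * bb n k * x^k
def rr (n : ℕ) (y : ℚ) : ℚ := ∑ k ∈ range (n+1), ((2*k).choose k : ℚ) * bb n k * y^k
def sS (n : ℕ) (y : ℚ) : ℚ :=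
  ∑ k ∈ range (n+1), ((2*k).choose k : ℚ) * (n.choose k : ℚ) * ((n+1+k).choose k : ℚ) * y^k

def shf (f : ℕ → ℚ) : ℕ → ℚ
  | 0 => 0
  | (k+1) => f k

lemma sum_ext (f : ℕ → ℚ) (x : ℚ) {N M : ℕ} (h : N ≤ M) (hz : ∀ k, N ≤ k → f k = 0) :
    ∑ k ∈ range N, f k * x^k = ∑ k ∈ range M, f k * x^k := by
  apply Finset.sum_subset (by exact range_subset_range.2 h)
  intro i _ hni
  rw [hz i (by simpa using hni)]
  ring

lemma sum_shift (f : ℕ → ℚ) (x : ℚ) (N : ℕ) :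
    x * ∑ k ∈ range N, f k * x^k = ∑ k ∈ range (N+1), shf f k * x^k := by
  rw [Finset.sum_range_succ']
  simp only [shf, pow_zero, mul_one, mul_zero, add_zero, Finset.mul_sum]
  apply Finset.sum_congr rfl
  intro k _
  ring

lemma lrec (n : ℕ) (x : ℚ) :
    ((n:ℚ)+2) * ll (n+2) x
      = (2*(n:ℚ)+3) * ((1-2*x) * ll (n+1) x) - ((n:ℚ)+1) * ll n x := by
  have hz1 : ∀ k, n+2 ≤ k → (-1:ℚ)^k * bb (n+1) k = 0 := by
    intro k hk; simp [bb, Nat.choose_eq_zero_of_lt (show n+1 < k by omega)]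
  have hz0 : ∀ k, n+1 ≤ k → (-1:ℚ)^k * bb n k = 0 := by
    intro k hk; simp [bb, Nat.choose_eq_zero_of_lt (show n < k by omega)]
  have h1 : ll (n+1) x = ∑ k ∈ range (n+3), (-1)^k * bb (n+1) k * x^k :=
    sum_ext _ x (by omega) hz1
  have h0 : ll n x = ∑ k ∈ range (n+3), (-1)^k * bb n k * x^k :=
    sum_ext _ x (by omega) hz0
  have hs : x * ll (n+1) x = ∑ k ∈ range (n+3), shf (fun k => (-1)^k * bb (n+1) k) k * x^k := by
    rw [ll]; exact sum_shift _ x (n+2)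
  have expand : (2*(n:ℚ)+3) * ((1-2*x) * ll (n+1) x)
      = (2*(n:ℚ)+3) * ll (n+1) x - (2*(2*(n:ℚ)+3)) * (x * ll (n+1) x) := by ring
  rw [expand, hs, h1, h0, ll]
  rw [Finset.mul_sum, Finset.mul_sum, Finset.mul_sum, Finset.mul_sum,
    ← Finset.sum_sub_distrib, ← Finset.sum_sub_distrib]
  apply Finset.sum_congr rfl
  intro k _
  match k with
  | 0 => simp [shf, bb]; ring
  | (j+1) =>
    simp only [shf, bb, show n+2+(j+1) = n+3+j from by omega,
      show n+1+(j+1) = n+2+j from by omega, show n+(j+1) = n+1+j from by omega]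
    have h := E0k n j
    linear_combination ((-1:ℚ)^(j+1) * x^(j+1)) * h

lemma srec (n : ℕ) (y : ℚ) :
    ((n:ℚ)+2) * sS (n+1) y = (2*(n:ℚ)+3) * rr (n+1) y - ((n:ℚ)+1) * sS n y := by
  have hzs : ∀ k, n+1 ≤ k → ((2*k).choose k : ℚ) * (n.choose k : ℚ) * ((n+1+k).choose k : ℚ) = 0 := by
    intro k hk; simp [Nat.choose_eq_zero_of_lt (show n < k by omega)]
  have h0 : sS n y = ∑ k ∈ range (n+2), ((2*k).choose k : ℚ) * (n.choose k : ℚ) * ((n+1+k).choose k : ℚ) * y^k :=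
    sum_ext _ y (by omega) hzs
  rw [h0, sS, rr]
  rw [Finset.mul_sum, Finset.mul_sum, Finset.mul_sum, ← Finset.sum_sub_distrib]
  apply Finset.sum_congr rfl
  intro k _
  simp only [bb, show n+1+1+k = n+2+k from by omega]
  have h := E1k n k
  linear_combination (((2*k).choose k : ℚ) * y^k) * h

lemma rrec (n : ℕ) (y : ℚ) :
    ((n:ℚ)+2)^2 * rr (n+2) y
      = (2*(n:ℚ)+3)^2 * ((1+4*y) * rr (n+1) y)
        - 2*((n:ℚ)+1)*(2*(n:ℚ)+3) * ((1+4*y) * sS n y)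
        + ((n:ℚ)+1)^2 * rr n y := by
  have hz1 : ∀ k, n+2 ≤ k → ((2*k).choose k : ℚ) * bb (n+1) k = 0 := by
    intro k hk; simp [bb, Nat.choose_eq_zero_of_lt (show n+1 < k by omega)]
  have hz0 : ∀ k, n+1 ≤ k → ((2*k).choose k : ℚ) * bb n k = 0 := by
    intro k hk; simp [bb, Nat.choose_eq_zero_of_lt (show n < k by omega)]
  have hzs : ∀ k, n+1 ≤ k → ((2*k).choose k : ℚ) * (n.choose k : ℚ) * ((n+1+k).choose k : ℚ) = 0 := by
    intro k hk; simp [Nat.choose_eq_zero_of_lt (show n < k by omega)]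
  have hzs' : ∀ k, n+2 ≤ k →
      shf (fun k => ((2*k).choose k : ℚ) * (n.choose k : ℚ) * ((n+1+k).choose k : ℚ)) k = 0 := by
    intro k hk
    match k with
    | (j+1) => exact hzs j (by omega)
  have h1 : rr (n+1) y = ∑ k ∈ range (n+3), ((2*k).choose k : ℚ) * bb (n+1) k * y^k :=
    sum_ext _ y (by omega) hz1
  have h0 : rr n y = ∑ k ∈ range (n+3), ((2*k).choose k : ℚ) * bb n k * y^k :=
    sum_ext _ y (by omega) hz0
  have hS : sS n y = ∑ k ∈ range (n+3), ((2*k).choose k : ℚ) * (n.choose k : ℚ) * ((n+1+k).choose k : ℚ) * y^k :=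
    sum_ext _ y (by omega) hzs
  have hs1 : y * rr (n+1) y
      = ∑ k ∈ range (n+3), shf (fun k => ((2*k).choose k : ℚ) * bb (n+1) k) k * y^k := by
    rw [rr]; exact sum_shift _ y (n+2)
  have hsS : y * sS n y
      = ∑ k ∈ range (n+3), shf (fun k => ((2*k).choose k : ℚ) * (n.choose k : ℚ) * ((n+1+k).choose k : ℚ)) k * y^k := by
    rw [sS, sum_shift _ y (n+1)]
    exact sum_ext _ y (by omega) hzs'
  have expand1 : (2*(n:ℚ)+3)^2 * ((1+4*y) * rr (n+1) y)
      = (2*(n:ℚ)+3)^2 * rr (n+1) y + (4*(2*(n:ℚ)+3)^2) * (y * rr (n+1) y) := by ring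
  have expand2 : 2*((n:ℚ)+1)*(2*(n:ℚ)+3) * ((1+4*y) * sS n y)
      = 2*((n:ℚ)+1)*(2*(n:ℚ)+3) * sS n y + (8*((n:ℚ)+1)*(2*(n:ℚ)+3)) * (y * sS n y) := by ring
  rw [expand1, expand2, hs1, hsS, h1, h0, hS, rr]
  rw [Finset.mul_sum, Finset.mul_sum, Finset.mul_sum, Finset.mul_sum, Finset.mul_sum,
    Finset.mul_sum]
  rw [← Finset.sum_add_distrib, ← Finset.sum_add_distrib, ← Finset.sum_sub_distrib,
    ← Finset.sum_add_distrib]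
  apply Finset.sum_congr rfl
  intro k _
  match k with
  | 0 => simp [shf, bb]; ring
  | (j+1) =>
    simp only [shf, bb, show n+2+(j+1) = n+3+j from by omega,
      show n+1+(j+1) = n+2+j from by omega, show n+(j+1) = n+1+j from by omega,
      show 2*(j+1) = 2*j+2 from by omega]
    have h := E2k n j
    linear_combination (y^(j+1)) * h

/-! ### the exact identity -/

lemma VW (n : ℕ) :
    (∀ x : ℚ, ll n x ^ 2 = rr n (x^2-x))
    ∧ (∀ x : ℚ, ll (n+1) x ^ 2 = rr (n+1) (x^2-x))
    ∧ (∀ x : ℚ, ll (n+1) x * ll n x = (1-2*x) * sS n (x^2-x)) := by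
  induction n with
  | zero =>
    refine ⟨?_, ?_, ?_⟩ <;> intro x <;>
      simp [ll, rr, sS, bb, Finset.sum_range_succ] <;> ring
  | succ n ih =>
    obtain ⟨V0, V1, W⟩ := ih
    have hn2 : ((n:ℚ)+2) ≠ 0 := by positivity
    refine ⟨V1, ?_, ?_⟩
    · intro x
      apply mul_left_cancel₀ (pow_ne_zero 2 hn2)
      have hl := lrec n x
      have hr := rrec n (x^2-x)
      push_cast
      linear_combination (((n:ℚ)+2)*ll (n+2) x + (2*(n:ℚ)+3)*(1-2*x)*ll (n+1) x - ((n:ℚ)+1)*ll n x) * hl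
        + (2*(n:ℚ)+3)^2*(1-2*x)^2 * V1 x
        - 2*((n:ℚ)+1)*(2*(n:ℚ)+3)*(1-2*x) * W x
        + ((n:ℚ)+1)^2 * V0 x
        - hr
    · intro x
      apply mul_left_cancel₀ hn2
      have hl := lrec n x
      have hs := srec n (x^2-x)
      push_cast
      linear_combination (ll (n+1) x) * hl
        + (2*(n:ℚ)+3)*(1-2*x) * V1 x
        - ((n:ℚ)+1) * W x
        - (1-2*x) * hs

lemma main_identity (n : ℕ) (x : ℚ) : ll n x ^ 2 = rr n (x^2-x) := (VW n).1 x


/-! ### gchoose evaluation -/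

lemma prod_desc (n k : ℕ) (h : k ≤ n) :
    (∏ i ∈ Finset.range k, ((n:ℚ) - i)) * ((n-k).factorial : ℚ) = (n.factorial : ℚ) := by
  induction k with
  | zero => simp
  | succ k ih =>
    have hk : k ≤ n := by omega
    have ih' := ih hk
    rw [show n - k = (n - (k+1)) + 1 from by omega, Nat.factorial_succ] at ih'
    rw [Finset.prod_range_succ]
    have hc : ((n - (k+1) : ℕ) : ℚ) = (n:ℚ) - (k+1) := by
      push_cast [Nat.cast_sub h]; ring
    push_cast [hc] at ih' ⊢
    linear_combination ih'

lemma gchoose_nat {n k : ℕ} (h : k ≤ n) : gchoose (n:ℚ) k = (n.choose k : ℚ) := by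
  have hd := prod_desc n k h
  have h1 : ((n-k).factorial : ℚ) ≠ 0 := Nat.cast_ne_zero.2 (Nat.factorial_ne_zero _)
  have h2 : ((k).factorial : ℚ) ≠ 0 := Nat.cast_ne_zero.2 (Nat.factorial_ne_zero _)
  rw [gchoose, Nat.cast_choose ℚ h, div_eq_div_iff h2 (by positivity)]
  linear_combination ((k.factorial : ℚ)) * hd

lemma gchoose_zero_of_lt {n k : ℕ} (h : n < k) : gchoose (n:ℚ) k = 0 := by
  rw [gchoose, Finset.prod_eq_zero (Finset.mem_range.2 h) (by simp : (n:ℚ) - (n:ℕ) = 0)]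
  simp

lemma prod_asc (n k : ℕ) :
    (∏ i ∈ Finset.range k, ((n:ℚ) + 1 + i)) * (n.factorial : ℚ) = ((n+k).factorial : ℚ) := by
  induction k with
  | zero => simp
  | succ k ih =>
    rw [Finset.prod_range_succ, show n+(k+1) = (n+k)+1 from by omega, Nat.factorial_succ]
    push_cast at ih ⊢
    linear_combination ((n:ℚ)+1+k) * ih

lemma gchoose_neg (n k : ℕ) : gchoose (-1 - (n:ℚ)) k = (-1)^k * ((n+k).choose k : ℚ) := by
  have hpr : (∏ i ∈ Finset.range k, ((-1 - (n:ℚ)) - i))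
      = (-1)^k * ∏ i ∈ Finset.range k, ((n:ℚ) + 1 + i) := by
    rw [show ((-1:ℚ))^k = ∏ _i ∈ Finset.range k, (-1:ℚ) from by
      rw [Finset.prod_const, Finset.card_range], ← Finset.prod_mul_distrib]
    exact Finset.prod_congr rfl (fun i _ => by ring)
  have ha := prod_asc n k
  have h1 : ((n).factorial : ℚ) ≠ 0 := Nat.cast_ne_zero.2 (Nat.factorial_ne_zero _)
  have h2 : ((k).factorial : ℚ) ≠ 0 := Nat.cast_ne_zero.2 (Nat.factorial_ne_zero _)
  rw [gchoose, hpr, Nat.cast_choose ℚ (show k ≤ n+k by omega), Nat.add_sub_cancel,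
    ← mul_div_assoc, div_eq_div_iff h2 (by positivity)]
  linear_combination ((-1:ℚ))^k * (k.factorial : ℚ) * ha

/-! ### truncated sums at a natural number -/

lemma trunc_f {p n : ℕ} (hn : n < p) (x : ℚ) :
    ∑ k ∈ Finset.range p, gchoose (n:ℚ) k * gchoose (-1 - (n:ℚ)) k * x^k = ll n x := by
  rw [ll, ← sum_ext (fun k => gchoose (n:ℚ) k * gchoose (-1 - (n:ℚ)) k) x
    (show n+1 ≤ p by omega) (fun k hk => by
      show gchoose (n:ℚ) k * gchoose (-1 - (n:ℚ)) k = 0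
      rw [gchoose_zero_of_lt (show n < k by omega)]; ring)]
  apply Finset.sum_congr rfl
  intro k hk
  rw [gchoose_nat (show k ≤ n by simpa [Nat.lt_succ_iff] using hk), gchoose_neg, bb]
  ring

lemma trunc_g {p n : ℕ} (hn : n < p) (x : ℚ) :
    ∑ k ∈ Finset.range p, ((2*k).choose k : ℚ) * gchoose (n:ℚ) k * gchoose (-1 - (n:ℚ)) k
        * (x*(1-x))^k
      = rr n (x^2 - x) := by
  have step1 : ∀ k : ℕ, ((2*k).choose k : ℚ) * gchoose (n:ℚ) k * gchoose (-1 - (n:ℚ)) k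
      * (x*(1-x))^k = (fun k => ((2*k).choose k : ℚ) * bb n k) k * (x^2-x)^k := by
    intro k
    show _ = ((2*k).choose k : ℚ) * bb n k * (x^2-x)^k
    rcases le_or_gt k n with h | h
    · have hsign : ((-1:ℚ))^k * (x*(1-x))^k = (x^2-x)^k := by
        rw [← mul_pow]; congr 1; ring
      rw [gchoose_nat h, gchoose_neg, bb]
      linear_combination (((2*k).choose k : ℚ) * (n.choose k : ℚ) * ((n+k).choose k : ℚ)) * hsign
    · rw [gchoose_zero_of_lt h, bb, Nat.choose_eq_zero_of_lt h]
      push_cast; ring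
  calc ∑ k ∈ Finset.range p, ((2*k).choose k : ℚ) * gchoose (n:ℚ) k * gchoose (-1 - (n:ℚ)) k
        * (x*(1-x))^k
      = ∑ k ∈ Finset.range p, (fun k => ((2*k).choose k : ℚ) * bb n k) k * (x^2-x)^k :=
        Finset.sum_congr rfl (fun k _ => step1 k)
    _ = ∑ k ∈ Finset.range (n+1), (fun k => ((2*k).choose k : ℚ) * bb n k) k * (x^2-x)^k := by
        rw [← sum_ext (fun k => ((2*k).choose k : ℚ) * bb n k) (x^2-x) (show n+1 ≤ p by omega)
          (fun k hk => by
            show ((2*k).choose k : ℚ) * bb n k = 0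
            rw [bb, Nat.choose_eq_zero_of_lt (show n < k by omega)]
            push_cast; ring)]
    _ = rr n (x^2-x) := rfl

/-! ### the polynomial and its factorization -/

open Polynomial in
noncomputable def PP (k : ℕ) : Polynomial ℚ :=
  (∏ i ∈ Finset.range k, (X - C (i:ℚ))) * (∏ i ∈ Finset.range k, (-1 - X - C (i:ℚ)))

open Polynomial in
noncomputable def FF (p : ℕ) (x : ℚ) : Polynomial ℚ :=
  (∑ k ∈ Finset.range p, C (x^k * ((k.factorial : ℚ))⁻¹ * ((k.factorial : ℚ))⁻¹) * PP k)^2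
  - ∑ k ∈ Finset.range p,
      C (((2*k).choose k : ℚ) * (x*(1-x))^k * ((k.factorial : ℚ))⁻¹ * ((k.factorial : ℚ))⁻¹) * PP k

open Polynomial in
lemma PP_eval (k : ℕ) (a : ℚ) :
    (PP k).eval a = (∏ i ∈ Finset.range k, (a - i)) * (∏ i ∈ Finset.range k, (-1 - a - i)) := by
  simp [PP, eval_prod]

open Polynomial in
lemma FF_eval (p : ℕ) (x a : ℚ) :
    (FF p x).eval a
      = (∑ k ∈ Finset.range p, gchoose a k * gchoose (-1-a) k * x^k)^2
        - ∑ k ∈ Finset.range p,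
            ((2*k).choose k : ℚ) * gchoose a k * gchoose (-1-a) k * (x*(1-x))^k := by
  rw [FF, eval_sub, eval_pow, eval_finset_sum, eval_finset_sum]
  congr 1
  · congr 1
    apply Finset.sum_congr rfl
    intro k _
    rw [eval_mul, eval_C, PP_eval, gchoose, gchoose]
    field_simp
  · apply Finset.sum_congr rfl
    intro k _
    rw [eval_mul, eval_C, PP_eval, gchoose, gchoose]
    field_simp

open Polynomial in
lemma FF_symm (p : ℕ) (x a : ℚ) : (FF p x).eval (-1-a) = (FF p x).eval a := by
  rw [FF_eval, FF_eval]
  congr 1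
  · congr 1
    apply Finset.sum_congr rfl
    intro k _
    rw [show (-1-(-1-a)) = a from by ring]
    ring
  · apply Finset.sum_congr rfl
    intro k _
    rw [show (-1-(-1-a)) = a from by ring]
    ring

open Polynomial in
lemma FF_root {p n : ℕ} (hn : n < p) (x : ℚ) : (FF p x).eval (n:ℚ) = 0 := by
  rw [FF_eval, trunc_f hn x, trunc_g hn x, main_identity n x, sub_self]

open Polynomial in
lemma FF_root_neg {p n : ℕ} (hn : n < p) (x : ℚ) : (FF p x).eval (-1-(n:ℚ)) = 0 := by
  rw [FF_symm]; exact FF_root hn x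

open Polynomial in
lemma FF_mem_lifts {p : ℕ} (hp : p.Prime) {x : ℚ} (hx : IsPInt p x) :
    FF p x ∈ Polynomial.lifts (R0 hp).subtype := by
  rw [Polynomial.lifts_iff_liftsRing]
  have hC : ∀ c : ℚ, IsPInt p c → Polynomial.C c ∈ liftsRing (R0 hp).subtype := by
    intro c hc
    rw [← Polynomial.lifts_iff_liftsRing]
    exact C'_mem_lifts ⟨⟨c, hc⟩, rfl⟩
  have hX : (X : ℚ[X]) ∈ liftsRing (R0 hp).subtype := by
    rw [← Polynomial.lifts_iff_liftsRing]; exact X_mem_lifts _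
  have hPP : ∀ k, PP k ∈ liftsRing (R0 hp).subtype := by
    intro k
    apply Subring.mul_mem
    · apply Subring.prod_mem
      intro i _
      exact Subring.sub_mem _ hX (hC _ (isPInt_natCast hp i))
    · apply Subring.prod_mem
      intro i _
      apply Subring.sub_mem
      apply Subring.sub_mem
      · exact Subring.neg_mem _ (Subring.one_mem _)
      · exact hX
      · exact hC _ (isPInt_natCast hp i)
  apply Subring.sub_mem
  · apply Subring.pow_mem
    apply Subring.sum_mem
    intro k hk
    have hkp : k < p := Finset.mem_range.1 hk
    apply Subring.mul_mem _ _ (hPP k)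
    exact hC _ (((hx.pow hp k).mul hp (isPInt_inv_factorial hp hkp)).mul hp
      (isPInt_inv_factorial hp hkp))
  · apply Subring.sum_mem
    intro k hk
    have hkp : k < p := Finset.mem_range.1 hk
    apply Subring.mul_mem _ _ (hPP k)
    refine hC _ ((((isPInt_natCast hp _).mul hp (((hx.mul hp ((isPInt_natCast hp 1).sub hp hx)).pow hp k))).mul hp
      (isPInt_inv_factorial hp hkp)).mul hp (isPInt_inv_factorial hp hkp))

open Polynomial in
/-- The key factorization: FF = D·Q with D the product of linear factors and Q p-integral. -/
lemma FF_factor {p : ℕ} (hp : p.Prime) {x : ℚ} (hx : IsPInt p x) :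
    ∃ qq : Polynomial (R0 hp),
      FF p x = ((∏ i ∈ Finset.range p, (X - C (i:ℚ))) * (∏ i ∈ Finset.range p, (X + C ((i:ℚ)+1))))
        * Polynomial.map (R0 hp).subtype qq := by
  haveI : Nontrivial (R0 hp) := ⟨⟨0, 1, fun h => zero_ne_one (congrArg ((↑) : _ → ℚ) h)⟩⟩
  obtain ⟨q, hq⟩ := (Polynomial.mem_lifts _).1 (FF_mem_lifts hp hx)
  set σ := (R0 hp).subtype
  set ρ : ℕ → R0 hp := fun i => ⟨(i:ℚ), isPInt_natCast hp i⟩ with hρ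
  set D0 : Polynomial (R0 hp) :=
    (∏ i ∈ Finset.range p, (X - C (ρ i))) * (∏ i ∈ Finset.range p, (X + C (ρ i + 1))) with hD0
  have hmon : D0.Monic :=
    (monic_prod_of_monic _ _ fun i _ => monic_X_sub_C _).mul
      (monic_prod_of_monic _ _ fun i _ => monic_X_add_C _)
  have hdegD : D0.natDegree = 2*p := by
    rw [hD0, (monic_prod_of_monic _ _ fun i _ => monic_X_sub_C _).natDegree_mul
      (monic_prod_of_monic _ _ fun i _ => monic_X_add_C _),
      natDegree_prod_of_monic _ _ (fun i _ => monic_X_sub_C _),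
      natDegree_prod_of_monic _ _ (fun i _ => monic_X_add_C _),
      Finset.sum_congr rfl (fun i _ => natDegree_X_sub_C (ρ i)),
      Finset.sum_congr rfl (fun i _ => natDegree_X_add_C (ρ i + 1))]
    simp only [Finset.sum_const, Finset.card_range, smul_eq_mul, mul_one]
    omega
  have hmapD : Polynomial.map σ D0
      = (∏ i ∈ Finset.range p, (X - C (i:ℚ))) * (∏ i ∈ Finset.range p, (X + C ((i:ℚ)+1))) := by
    rw [hD0, Polynomial.map_mul, Polynomial.map_prod, Polynomial.map_prod]
    congr 1
    · apply Finset.prod_congr rfl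
      intro i _
      rw [Polynomial.map_sub, Polynomial.map_X, Polynomial.map_C]
      rfl
    · apply Finset.prod_congr rfl
      intro i _
      rw [Polynomial.map_add, Polynomial.map_X, Polynomial.map_C]
      rfl
  have hdiv := Polynomial.modByMonic_add_div q D0
  refine ⟨q /ₘ D0, ?_⟩
  have hFF : FF p x = Polynomial.map σ (q %ₘ D0) + Polynomial.map σ D0 * Polynomial.map σ (q /ₘ D0) := by
    rw [← hq, ← Polynomial.map_mul, ← Polynomial.map_add, hdiv]
  -- evaluation points
  set S : Finset ℚ := ((Finset.range p).image (fun i : ℕ => (i:ℚ)))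
      ∪ ((Finset.range p).image (fun i : ℕ => -1-(i:ℚ))) with hS
  have hevalD : ∀ c ∈ S, (Polynomial.map σ D0).eval c = 0 := by
    intro c hc
    rw [hmapD, eval_mul, eval_prod, eval_prod]
    rw [hS, Finset.mem_union] at hc
    rcases hc with hc | hc
    · obtain ⟨i, hi, rfl⟩ := Finset.mem_image.1 hc
      apply mul_eq_zero_of_left
      exact Finset.prod_eq_zero hi (by simp)
    · obtain ⟨i, hi, rfl⟩ := Finset.mem_image.1 hc
      apply mul_eq_zero_of_right
      apply Finset.prod_eq_zero hi
      simp only [eval_add, eval_X, eval_C]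
      ring
  have hevalFF : ∀ c ∈ S, (FF p x).eval c = 0 := by
    intro c hc
    rw [hS, Finset.mem_union] at hc
    rcases hc with hc | hc
    · obtain ⟨i, hi, rfl⟩ := Finset.mem_image.1 hc
      exact FF_root (Finset.mem_range.1 hi) x
    · obtain ⟨i, hi, rfl⟩ := Finset.mem_image.1 hc
      exact FF_root_neg (Finset.mem_range.1 hi) x
  have hcardS : S.card = 2*p := by
    rw [hS, Finset.card_union_of_disjoint, Finset.card_image_of_injective _ Nat.cast_injective,
      Finset.card_image_of_injective, Finset.card_range]
    · omega
    · intro i j hij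
      have : (i:ℚ) = j := by linarith [sub_eq_sub_iff_add_eq_add.1 hij]
      exact_mod_cast this
    · rw [Finset.disjoint_left]
      rintro c hc1 hc2
      obtain ⟨i, _, rfl⟩ := Finset.mem_image.1 hc1
      obtain ⟨j, _, hj⟩ := Finset.mem_image.1 hc2
      have h1 : (0:ℚ) ≤ i := by positivity
      have h2 : (-1-(j:ℚ)) ≤ -1 := by
        have : (0:ℚ) ≤ j := by positivity
        linarith
      rw [← hj] at h1
      linarith
  have hrem : Polynomial.map σ (q %ₘ D0) = 0 := by
    by_cases h0 : q %ₘ D0 = 0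
    · rw [h0, Polynomial.map_zero]
    apply Polynomial.eq_zero_of_natDegree_lt_card_of_eval_eq_zero' _ S
    · intro c hc
      have := hFF
      have hev := congrArg (fun P => Polynomial.eval c P) hFF
      simp only [eval_add, eval_mul] at hev
      rw [hevalD c hc, zero_mul, add_zero] at hev
      rw [← hev, hevalFF c hc]
    · calc (Polynomial.map σ (q %ₘ D0)).natDegree
          ≤ (q %ₘ D0).natDegree := Polynomial.natDegree_map_le
        _ < D0.natDegree := Polynomial.natDegree_lt_natDegree h0 (degree_modByMonic_lt q hmon)
        _ = 2*p := hdegD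
        _ = S.card := hcardS.symm
  rw [hFF, hrem, zero_add, hmapD]

theorem sq_sum_cong (p : ℕ) (hp : p.Prime) (hodd : Odd p)
    (a x : ℚ) (ha : IsPInt p a) (hx : IsPInt p x) :
    ModCong p 2
      ((∑ k ∈ Finset.range p, gchoose a k * gchoose (-1 - a) k * x ^ k) ^ 2)
      (∑ k ∈ Finset.range p,
        ((2 * k).choose k : ℚ) * gchoose a k * gchoose (-1 - a) k * (x * (1 - x)) ^ k) := by
  classical
  obtain ⟨qq, hfac⟩ := FF_factor hp hx
  obtain ⟨n, hnp, ht⟩ := exists_residue hp ha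
  set t : ℚ := (a - n)/p with htdef
  have hp0 : (p:ℚ) ≠ 0 := Nat.cast_ne_zero.2 hp.pos.ne'
  have hat : a - n = p * t := by
    rw [htdef]; field_simp
  have heval := congrArg (Polynomial.eval a) hfac
  rw [FF_eval] at heval
  set w : ℚ := (Polynomial.map (R0 hp).subtype qq).eval a with hw
  have hwmem : IsPInt p w := by
    have hsub : a = (R0 hp).subtype ⟨a, ha⟩ := rfl
    rw [hw, hsub, Polynomial.eval_map, Polynomial.eval₂_at_apply]
    exact (qq.eval ⟨a, ha⟩).2
  have hD : Polynomial.eval a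
      ((∏ i ∈ Finset.range p, (Polynomial.X - Polynomial.C (i:ℚ)))
        * (∏ i ∈ Finset.range p, (Polynomial.X + Polynomial.C ((i:ℚ)+1))))
      = (∏ i ∈ Finset.range p, (a - (i:ℚ))) * (∏ i ∈ Finset.range p, (a + ((i:ℚ)+1))) := by
    simp [Polynomial.eval_prod]
  have hmemn : n ∈ Finset.range p := Finset.mem_range.2 hnp
  have hmemn' : p - 1 - n ∈ Finset.range p := Finset.mem_range.2 (by omega)
  have hP1 : (∏ i ∈ Finset.range p, (a - (i:ℚ)))
      = (a - n) * ∏ i ∈ (Finset.range p).erase n, (a - (i:ℚ)) :=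
    (Finset.mul_prod_erase _ _ hmemn).symm
  have hP2 : (∏ i ∈ Finset.range p, (a + ((i:ℚ)+1)))
      = (a + (((p-1-n : ℕ):ℚ)+1)) * ∏ i ∈ (Finset.range p).erase (p-1-n), (a + ((i:ℚ)+1)) :=
    (Finset.mul_prod_erase _ _ hmemn').symm
  have hcast : ((p-1-n : ℕ):ℚ) + 1 = (p:ℚ) - n := by
    rw [show p-1-n = p-(n+1) from by omega, Nat.cast_sub (by omega : n+1 ≤ p)]
    push_cast; ring
  have hkey : a + (((p-1-n : ℕ):ℚ)+1) = (p:ℚ) * (t+1) := by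
    rw [hcast]; linear_combination hat
  refine ⟨t * (t+1) * (∏ i ∈ (Finset.range p).erase n, (a - (i:ℚ)))
      * (∏ i ∈ (Finset.range p).erase (p-1-n), (a + ((i:ℚ)+1))) * w, ?_, ?_⟩
  · show IsPInt p _
    have h1 : IsPInt p (∏ i ∈ (Finset.range p).erase n, (a - (i:ℚ))) :=
      Subring.prod_mem (R0 hp) (fun i _ => Subring.sub_mem _ ha (isPInt_natCast hp i))
    have h2 : IsPInt p (∏ i ∈ (Finset.range p).erase (p-1-n), (a + ((i:ℚ)+1))) :=
      Subring.prod_mem (R0 hp) (fun i _ => Subring.add_mem _ ha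
        (Subring.add_mem _ (isPInt_natCast hp i) (Subring.one_mem _)))
    have ht1 : IsPInt p (t+1) := ht.add hp (by simpa using isPInt_natCast hp 1)
    exact (((ht.mul hp ht1).mul hp h1).mul hp h2).mul hp hwmem
  · calc (∑ k ∈ Finset.range p, gchoose a k * gchoose (-1 - a) k * x ^ k) ^ 2
        - (∑ k ∈ Finset.range p,
            ((2 * k).choose k : ℚ) * gchoose a k * gchoose (-1 - a) k * (x * (1 - x)) ^ k)
        = _ := heval
      _ = ((∏ i ∈ Finset.range p, (a - (i:ℚ))) * (∏ i ∈ Finset.range p, (a + ((i:ℚ)+1)))) * w := by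
          rw [Polynomial.eval_mul, hD, hw]
      _ = ((a-n) * ∏ i ∈ (Finset.range p).erase n, (a - (i:ℚ)))
            * ((a + (((p-1-n : ℕ):ℚ)+1)) * ∏ i ∈ (Finset.range p).erase (p-1-n), (a + ((i:ℚ)+1)))
            * w := by rw [← hP1, ← hP2]
      _ = ((p:ℚ) * t * ∏ i ∈ (Finset.range p).erase n, (a - (i:ℚ)))
            * (((p:ℚ) * (t+1)) * ∏ i ∈ (Finset.range p).erase (p-1-n), (a + ((i:ℚ)+1)))
            * w := by rw [← hat, ← hkey]
      _ = (p:ℚ)^2 * (t * (t+1) * (∏ i ∈ (Finset.range p).erase n, (a - (i:ℚ)))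
            * (∏ i ∈ (Finset.range p).erase (p-1-n), (a + ((i:ℚ)+1))) * w) := by ring
end
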